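/- arXiv:1912.08805 — 2 statements merged into one kernel-verified Lean document; each statement's English description precedes it below -/
import Mathlib

section
/- Let A, Ã be n×n complex matrices with ‖A − Ã‖ ≤ β, and suppose Ã = U R V where U and V are n×n unitary matrices and R is upper triangular. For 0 < r < n, let S be the n×r matrix consisting of the first r columns of U, and let R₂₂ be the lower-right (n−r)×(n−r) block of R. Then ‖(SS* − I)·A‖ ≤ ‖R₂₂‖ + β. -/
open Matrix

/-- The Euclidean norm of a vector in `ℂⁿ`. -/
noncomputable def enorm {n : ℕ} (v : Fin n → ℂ) : ℝ :=
  Real.sqrt (∑ i, ‖v i‖ ^ 2)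

/-- The spectral norm (`ℓ² → ℓ²` operator norm) of a complex matrix:
the supremum of `‖Av‖` over Euclidean-unit vectors `v`. -/
noncomputable def specNorm {m n : ℕ} (A : Matrix (Fin m) (Fin n) ℂ) : ℝ :=
  sSup {s | ∃ v : Fin n → ℂ, _root_.enorm v = 1 ∧ s = _root_.enorm (A.mulVec v)}

open scoped Matrix.Norms.L2Operator

lemma enorm_eq {n : ℕ} (v : Fin n → ℂ) :
    _root_.enorm v = ‖(WithLp.equiv 2 (Fin n → ℂ)).symm v‖ := by
  rw [EuclideanSpace.norm_eq]
  simp [_root_.enorm]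

lemma enorm_mulVec_le {m n : ℕ} (A : Matrix (Fin m) (Fin n) ℂ) (v : Fin n → ℂ) :
    _root_.enorm (A.mulVec v) ≤ ‖A‖ * _root_.enorm v := by
  rw [enorm_eq, enorm_eq]
  exact A.l2_opNorm_mulVec ((WithLp.equiv 2 (Fin n → ℂ)).symm v)

lemma l2norm_le_specNorm {m n : ℕ} (hn : 0 < n) (A : Matrix (Fin m) (Fin n) ℂ) :
    ‖A‖ ≤ specNorm A := by
  have hbdd : BddAbove {s | ∃ v : Fin n → ℂ, _root_.enorm v = 1 ∧ s = _root_.enorm (A.mulVec v)} := by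
    refine ⟨‖A‖, ?_⟩
    rintro s ⟨v, hv, rfl⟩
    simpa [hv] using enorm_mulVec_le A v
  have hmem : ∀ v : Fin n → ℂ, _root_.enorm v = 1 → _root_.enorm (A.mulVec v) ≤ specNorm A := fun v hv =>
    le_csSup hbdd ⟨v, hv, rfl⟩
  have hv0 : _root_.enorm (fun j : Fin n => if j = ⟨0, hn⟩ then (1 : ℂ) else 0) = 1 := by
    simp [_root_.enorm, apply_ite (fun z : ℂ => ‖z‖)]
  have h0 : (0 : ℝ) ≤ specNorm A := le_trans (Real.sqrt_nonneg _) (hmem _ hv0)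
  rw [Matrix.l2_opNorm_def]
  refine ContinuousLinearMap.opNorm_le_bound _ h0 fun x => ?_
  rcases eq_or_ne x 0 with rfl | hx
  · simp
  · have hxn : ‖x‖ ≠ 0 := norm_ne_zero_iff.mpr hx
    set v : Fin n → ℂ := ((‖x‖ : ℂ))⁻¹ • (WithLp.equiv 2 (Fin n → ℂ) x) with hv_def
    have hv1 : _root_.enorm v = 1 := by
      rw [enorm_eq]
      have : (WithLp.equiv 2 (Fin n → ℂ)).symm v = ((‖x‖ : ℂ))⁻¹ • x := rfl
      rw [this, norm_smul]
      simp [hxn]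
    have hAv : A.mulVec v = ((‖x‖ : ℂ))⁻¹ • A.mulVec (WithLp.equiv 2 (Fin n → ℂ) x) := by
      rw [hv_def, Matrix.mulVec_smul]
    have hnorm : _root_.enorm (A.mulVec v) = ‖x‖⁻¹ * _root_.enorm (A.mulVec (WithLp.equiv 2 (Fin n → ℂ) x)) := by
      rw [hAv, enorm_eq, enorm_eq]
      have : (WithLp.equiv 2 (Fin m → ℂ)).symm (((‖x‖ : ℂ))⁻¹ • A.mulVec (WithLp.equiv 2 (Fin n → ℂ) x))
          = ((‖x‖ : ℂ))⁻¹ • (WithLp.equiv 2 (Fin m → ℂ)).symm (A.mulVec (WithLp.equiv 2 (Fin n → ℂ) x)) := rfl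
      rw [this, norm_smul]
      simp
    have hfx : ‖(Matrix.toEuclideanLin.trans LinearMap.toContinuousLinearMap) A x‖
        = _root_.enorm (A.mulVec (WithLp.equiv 2 (Fin n → ℂ) x)) := by
      rw [enorm_eq]
      rfl
    have := hmem v hv1
    rw [hnorm] at this
    rw [hfx]
    have hxpos : 0 < ‖x‖ := lt_of_le_of_ne (norm_nonneg _) (Ne.symm hxn)
    calc _root_.enorm (A.mulVec (WithLp.equiv 2 (Fin n → ℂ) x))
        = ‖x‖ * (‖x‖⁻¹ * _root_.enorm (A.mulVec (WithLp.equiv 2 (Fin n → ℂ) x))) := by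
          field_simp
      _ ≤ ‖x‖ * specNorm A := by
          exact mul_le_mul_of_nonneg_left this (le_of_lt hxpos)
      _ = specNorm A * ‖x‖ := mul_comm _ _

lemma specNorm_le_l2norm {m n : ℕ} (A : Matrix (Fin m) (Fin n) ℂ) : specNorm A ≤ ‖A‖ :=
  Real.sSup_le (by rintro s ⟨v, hv, rfl⟩; simpa [hv] using enorm_mulVec_le A v)
    (norm_nonneg _)

lemma sum_shift {β : Type*} [AddCommMonoid β] {n r : ℕ} (hrn : r ≤ n) (g : Fin n → β)
    (hg : ∀ i : Fin n, i.val < r → g i = 0) :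
    ∑ i, g i = ∑ i : Fin (n - r), g ⟨r + i.val, by omega⟩ := by
  classical
  rw [← Finset.sum_filter_of_ne (p := fun i : Fin n => r ≤ i.val)
    (fun x _ hx => by by_contra h; exact hx (hg x (by omega)))]
  refine (Finset.sum_bij' (fun (i : Fin (n - r)) (_ : i ∈ Finset.univ) =>
      (⟨r + i.val, by omega⟩ : Fin n))
    (fun (i : Fin n) (hi : i ∈ Finset.univ.filter fun i : Fin n => r ≤ i.val) =>
      (⟨i.val - r, by have := (Finset.mem_filter.mp hi).2; omega⟩ : Fin (n - r)))
    ?_ ?_ ?_ ?_ ?_).symm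
  · intro a ha; simp [Finset.mem_filter]
  · intro a ha; simp
  · intro a ha; ext; simp
  · intro a ha; have := (Finset.mem_filter.mp ha).2; ext; simp; omega
  · intro a ha; rfl

lemma l2norm_pad_le {n r : ℕ} (hrn : r ≤ n) (B : Matrix (Fin (n - r)) (Fin (n - r)) ℂ)
    (M : Matrix (Fin n) (Fin n) ℂ)
    (h0 : ∀ i j : Fin n, i.val < r → M i j = 0)
    (h0' : ∀ i j : Fin n, j.val < r → M i j = 0)
    (hB : ∀ i j : Fin (n - r),
      M ⟨r + i.val, by omega⟩ ⟨r + j.val, by omega⟩ = B i j) :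
    ‖M‖ ≤ ‖B‖ := by
  rw [Matrix.l2_opNorm_def]
  refine ContinuousLinearMap.opNorm_le_bound _ (norm_nonneg B) fun x => ?_
  set x' : Fin n → ℂ := WithLp.equiv 2 (Fin n → ℂ) x with hx'
  set w : Fin (n - r) → ℂ := fun j => x' ⟨r + j.val, by omega⟩ with hw
  have key : ∀ i : Fin (n - r),
      (M.mulVec x') ⟨r + i.val, by omega⟩ = (B.mulVec w) i := by
    intro i
    unfold Matrix.mulVec dotProduct
    dsimp only
    rw [sum_shift hrn (fun j => M ⟨r + i.val, by omega⟩ j * x' j)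
      (fun j hj => by rw [h0' _ j hj, zero_mul])]
    exact Finset.sum_congr rfl fun j _ => by rw [hB i j]
  have hzero : ∀ i : Fin n, i.val < r → (M.mulVec x') i = 0 := by
    intro i hi
    unfold Matrix.mulVec dotProduct
    dsimp only
    exact Finset.sum_eq_zero fun j _ => by rw [h0 i j hi, zero_mul]
  have hMx : ‖(WithLp.equiv 2 (Fin n → ℂ)).symm (M.mulVec x')‖
      = ‖(WithLp.equiv 2 (Fin (n - r) → ℂ)).symm (B.mulVec w)‖ := by
    rw [EuclideanSpace.norm_eq, EuclideanSpace.norm_eq]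
    simp only [WithLp.equiv_symm_apply, WithLp.ofLp_toLp]
    congr 1
    rw [sum_shift hrn (fun i => ‖(M.mulVec x') i‖ ^ 2)
      (fun i hi => by rw [hzero i hi]; simp)]
    exact Finset.sum_congr rfl fun i _ => by rw [key i]
  have hwx : ‖(WithLp.equiv 2 (Fin (n - r) → ℂ)).symm w‖ ≤ ‖x‖ := by
    rw [EuclideanSpace.norm_eq, EuclideanSpace.norm_eq]
    simp only [WithLp.equiv_symm_apply, WithLp.ofLp_toLp]
    apply Real.sqrt_le_sqrt
    have h1 : ∑ i : Fin (n - r), ‖w i‖ ^ 2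
        = ∑ i : Fin (n - r), (fun k : Fin n => if r ≤ k.val then ‖x' k‖ ^ 2 else 0)
            ⟨r + i.val, by omega⟩ :=
      Finset.sum_congr rfl fun i _ => by simp [hw]
    rw [h1, ← sum_shift hrn (fun k : Fin n => if r ≤ k.val then ‖x' k‖ ^ 2 else 0)
      (fun i hi => by simp [Nat.not_le.mpr hi])]
    refine Finset.sum_le_sum fun i _ => ?_
    split
    · exact le_refl _
    · positivity
  calc ‖(Matrix.toEuclideanLin.trans LinearMap.toContinuousLinearMap) M x‖
      = ‖(WithLp.equiv 2 (Fin (n - r) → ℂ)).symm (B.mulVec w)‖ := hMx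
    _ ≤ ‖B‖ * ‖(WithLp.equiv 2 (Fin (n - r) → ℂ)).symm w‖ :=
        B.l2_opNorm_mulVec ((WithLp.equiv 2 (Fin (n - r) → ℂ)).symm w)
    _ ≤ ‖B‖ * ‖x‖ := mul_le_mul_of_nonneg_left hwx (norm_nonneg B)

/-- Let `‖A − Ã‖ ≤ β` and `Ã = U R V` with `U, V` unitary and `R` upper triangular.  For
`0 < r < n`, let `S` be the `n×r` matrix of the first `r` columns of `U` and `R₂₂` the
lower-right `(n−r)×(n−r)` block of `R`.  Then `‖(SS* − I)A‖ ≤ ‖R₂₂‖ + β`. -/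
theorem deflate_range_bound {n r : ℕ} (hr : 0 < r) (hrn : r < n) (β : ℝ)
    (A At U R V : Matrix (Fin n) (Fin n) ℂ)
    (hAAt : specNorm (A - At) ≤ β)
    (hU : U ∈ Matrix.unitaryGroup (Fin n) ℂ)
    (hV : V ∈ Matrix.unitaryGroup (Fin n) ℂ)
    (hR : R.BlockTriangular (id : Fin n → Fin n))
    (hURV : At = U * R * V) :
    specNorm
        (((Matrix.of fun i (j : Fin r) => U i (Fin.castLE hrn.le j)) *
            (Matrix.of fun i (j : Fin r) => U i (Fin.castLE hrn.le j))ᴴ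
          - (1 : Matrix (Fin n) (Fin n) ℂ)) * A)
      ≤ specNorm
          (Matrix.of fun (i j : Fin (n - r)) =>
            R ⟨r + (i : ℕ), by omega⟩ ⟨r + (j : ℕ), by omega⟩) + β := by
  classical
  have hU' : Uᴴ * U = 1 := by
    have := hU.1
    rwa [Matrix.star_eq_conjTranspose] at this
  set S : Matrix (Fin n) (Fin r) ℂ :=
    Matrix.of fun i (j : Fin r) => U i (Fin.castLE hrn.le j) with hS
  set B : Matrix (Fin (n - r)) (Fin (n - r)) ℂ :=
    Matrix.of fun (i j : Fin (n - r)) =>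
      R ⟨r + (i : ℕ), by omega⟩ ⟨r + (j : ℕ), by omega⟩ with hB
  set E : Matrix (Fin n) (Fin r) ℂ :=
    Matrix.of fun i (j : Fin r) => if i = Fin.castLE hrn.le j then 1 else 0 with hE
  set Q : Matrix (Fin n) (Fin n) ℂ := E * Eᴴ with hQ
  -- S = U * E
  have hSUE : S = U * E := by
    ext i j
    simp [hS, hE, Matrix.mul_apply, mul_ite, Finset.sum_ite_eq']
  -- Sᴴ * S = 1
  have hSS : Sᴴ * S = (1 : Matrix (Fin r) (Fin r) ℂ) := by
    ext i j
    have h1 := congrFun (congrFun hU' (Fin.castLE hrn.le i)) (Fin.castLE hrn.le j)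
    simp only [Matrix.mul_apply, Matrix.conjTranspose_apply, Matrix.one_apply] at h1 ⊢
    simp only [hS, Matrix.of_apply]
    rw [h1]
    simp [Fin.castLE_inj]
  -- (E * Eᴴ) * R entries
  have hQR : ∀ i j : Fin n, (Q * R) i j = if i.val < r then R i j else 0 := by
    intro i j
    rw [hQ, Matrix.mul_assoc, Matrix.mul_apply]
    have hF : ∀ l : Fin r, (Eᴴ * R) l j = R (Fin.castLE hrn.le l) j := by
      intro l
      simp [Matrix.mul_apply, Matrix.conjTranspose_apply, hE, apply_ite (starRingEnd ℂ),
        ite_mul, Finset.sum_ite_eq']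
    simp only [hF, hE, Matrix.of_apply, ite_mul, one_mul, zero_mul]
    by_cases hi : i.val < r
    · rw [Finset.sum_eq_single (⟨i.val, hi⟩ : Fin r), if_pos hi]
      · have hc : i = Fin.castLE hrn.le ⟨i.val, hi⟩ := rfl
        rw [if_pos hc]; exact hF _
      · intro b _ hb
        rw [if_neg]
        intro h
        exact hb (by ext; simpa [Fin.ext_iff] using congrArg Fin.val h.symm)
      · simp
    · rw [if_neg hi]
      refine Finset.sum_eq_zero fun b _ => ?_
      rw [if_neg]
      intro h
      exact hi (by simpa [Fin.ext_iff] using congrArg Fin.val h ▸ b.isLt)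
  -- key decomposition
  have hUX : ∀ X : Matrix (Fin n) (Fin n) ℂ, Uᴴ * (U * X) = X := fun X => by
    rw [← Matrix.mul_assoc, hU', Matrix.one_mul]
  have hP : S * Sᴴ = U * Q * Uᴴ := by
    rw [hSUE, Matrix.conjTranspose_mul, hQ]
    simp only [Matrix.mul_assoc]
  have hkey : (S * Sᴴ - 1) * At = U * ((Q - 1) * R) * V := by
    rw [hURV, hP, Matrix.sub_mul, Matrix.one_mul]
    have e1 : U * Q * Uᴴ * (U * R * V) = U * (Q * R) * V := by
      simp only [Matrix.mul_assoc]
      rw [hUX]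
    rw [e1, Matrix.sub_mul, Matrix.one_mul, Matrix.mul_sub, Matrix.sub_mul]
  have decomp : (S * Sᴴ - 1) * A
      = (S * Sᴴ - 1) * (A - At) + U * ((Q - 1) * R) * V := by
    rw [← hkey, ← Matrix.mul_add, sub_add_cancel]
  -- projection norm bound
  have hT : ‖S * Sᴴ - (1 : Matrix (Fin n) (Fin n) ℂ)‖ ≤ 1 := by
    set T : Matrix (Fin n) (Fin n) ℂ := 1 - S * Sᴴ with hTdef
    have hTstar : star T = T := by
      simp [hTdef, Matrix.star_eq_conjTranspose, Matrix.conjTranspose_sub,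
        Matrix.conjTranspose_mul]
    have hPP : S * Sᴴ * (S * Sᴴ) = S * Sᴴ := by
      rw [Matrix.mul_assoc, ← Matrix.mul_assoc Sᴴ S Sᴴ, hSS, Matrix.one_mul]
    have hidem : T * T = T := by
      simp only [hTdef, sub_mul, mul_sub, one_mul, mul_one, hPP]
      abel
    have hcs := CStarRing.norm_star_mul_self (x := T)
    rw [hTstar, hidem] at hcs
    have hnn : (0 : ℝ) ≤ ‖T‖ := norm_nonneg T
    have h1 : ‖S * Sᴴ - (1 : Matrix (Fin n) (Fin n) ℂ)‖ = ‖T‖ := by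
      rw [hTdef]; exact norm_sub_rev _ _
    nlinarith
  -- middle term
  have hMB : ‖(Q - 1) * R‖ ≤ ‖B‖ := by
    have hneg : (Q - 1) * R = -((1 - Q) * R) := by
      rw [← neg_mul, neg_sub]
    rw [hneg, norm_neg]
    refine l2norm_pad_le hrn.le B _ ?_ ?_ ?_
    · intro i j hi
      rw [Matrix.sub_mul, Matrix.one_mul, Matrix.sub_apply, hQR i j, if_pos hi, sub_self]
    · intro i j hj
      rw [Matrix.sub_mul, Matrix.one_mul, Matrix.sub_apply, hQR i j]
      by_cases hi : i.val < r
      · rw [if_pos hi, sub_self]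
      · rw [if_neg hi, hR (show (id j : Fin n) < id i by
          simp only [id_eq]; exact Fin.lt_def.mpr (by omega)), sub_zero]
    · intro i j
      rw [Matrix.sub_mul, Matrix.one_mul, Matrix.sub_apply, hQR, if_neg (by simp),
        sub_zero, hB]
      rfl
  -- final calc
  calc specNorm ((S * Sᴴ - 1) * A) ≤ ‖(S * Sᴴ - 1) * A‖ := specNorm_le_l2norm _
    _ = ‖(S * Sᴴ - 1) * (A - At) + U * ((Q - 1) * R) * V‖ := by rw [decomp]
    _ ≤ ‖(S * Sᴴ - 1) * (A - At)‖ + ‖U * ((Q - 1) * R) * V‖ := norm_add_le _ _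
    _ ≤ 1 * β + ‖B‖ := by
        gcongr
        · calc ‖(S * Sᴴ - 1) * (A - At)‖ ≤ ‖S * Sᴴ - 1‖ * ‖A - At‖ := norm_mul_le _ _
            _ ≤ 1 * β := by
                have hb : ‖A - At‖ ≤ β :=
                  le_trans (l2norm_le_specNorm (by omega) _) hAAt
                have h0b : (0 : ℝ) ≤ β := le_trans (norm_nonneg _) hb
                exact mul_le_mul hT hb (norm_nonneg _) zero_le_one
        · rw [CStarRing.norm_mul_mem_unitary _ hV, CStarRing.norm_mem_unitary_mul _ hU]
          exact hMB
    _ ≤ specNorm B + β := by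
        rw [one_mul, add_comm]
        gcongr
        exact l2norm_le_specNorm (by omega) B
end

section
/- Let A be an n×n complex matrix with A = V D V⁻¹, where V is invertible and D is diagonal. Let v_1,…,v_n be the columns of V and let w_1*,…,w_n* be the rows of V⁻¹. Then κ_V(A) ≤ √( n · Σ_{i=1}^n ‖v_i‖²·‖w_i‖² ), where κ_V(A) is the infimum of ‖V'‖·‖V'⁻¹‖ over all invertible V' such that V'⁻¹AV' is diagonal. -/
open Matrix

/-- The eigenvector condition number `κ_V(A)`: the infimum of `‖V'‖·‖V'⁻¹‖` over all invertible
`V'` such that `V'⁻¹ A V'` is diagonal. -/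
noncomputable def kappaV {n : ℕ} (A : Matrix (Fin n) (Fin n) ℂ) : ℝ :=
  sInf {x | ∃ V : Matrix (Fin n) (Fin n) ℂ,
    IsUnit V ∧ (V⁻¹ * A * V).IsDiag ∧ x = specNorm V * specNorm V⁻¹}

lemma enorm_nonneg {n : ℕ} (v : Fin n → ℂ) : 0 ≤ _root_.enorm v := Real.sqrt_nonneg _

lemma enorm_sq {n : ℕ} (v : Fin n → ℂ) : _root_.enorm v ^ 2 = ∑ i, ‖v i‖ ^ 2 := by
  rw [_root_.enorm, Real.sq_sqrt]
  positivity

lemma specNorm_nonneg {m n : ℕ} (A : Matrix (Fin m) (Fin n) ℂ) : 0 ≤ specNorm A :=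
  Real.sSup_nonneg (by rintro x ⟨v, hv, rfl⟩; exact enorm_nonneg _)

lemma specNorm_le_frob {m n : ℕ} (A : Matrix (Fin m) (Fin n) ℂ) :
    specNorm A ≤ Real.sqrt (∑ i, ∑ j, ‖A i j‖ ^ 2) := by
  apply Real.sSup_le _ (Real.sqrt_nonneg _)
  rintro x ⟨v, hv, rfl⟩
  rw [_root_.enorm]
  apply Real.sqrt_le_sqrt
  calc ∑ i, ‖A.mulVec v i‖ ^ 2
      ≤ ∑ i, (∑ j, ‖A i j‖ ^ 2) * ∑ j, ‖v j‖ ^ 2 := by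
        apply Finset.sum_le_sum
        intro i _
        calc ‖A.mulVec v i‖ ^ 2
            ≤ (∑ j, ‖A i j‖ * ‖v j‖) ^ 2 := by
              apply pow_le_pow_left₀ (norm_nonneg _)
              rw [mulVec, dotProduct]
              refine (norm_sum_le _ _).trans_eq ?_
              simp [_root_.map_mul]
          _ ≤ _ := Finset.sum_mul_sq_le_sq_mul_sq _ _ _
    _ = ∑ i, ∑ j, ‖A i j‖ ^ 2 := by
        have : ∑ j, ‖v j‖ ^ 2 = 1 := by
          rw [← enorm_sq, hv]; norm_num
        simp [this]

lemma enorm_pos_of_ne_zero {n : ℕ} {v : Fin n → ℂ} (h : v ≠ 0) : 0 < _root_.enorm v := by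
  obtain ⟨i, hi⟩ := Function.ne_iff.mp h
  apply Real.sqrt_pos.mpr
  apply Finset.sum_pos' (fun j _ => by positivity)
  refine ⟨i, Finset.mem_univ i, ?_⟩
  have h2 : v i ≠ 0 := hi
  exact pow_pos (norm_pos_iff.mpr h2) 2

set_option maxHeartbeats 1000000 in
/-- If `A = V D V⁻¹` with `V` invertible and `D` diagonal, and `v_i` denote the columns of `V`
and `w_i*` the rows of `V⁻¹`, then `κ_V(A) ≤ √(n · Σ_i ‖v_i‖²‖w_i‖²)`. -/
theorem kappaV_le_sqrt_sum {n : ℕ} (A V : Matrix (Fin n) (Fin n) ℂ) (d : Fin n → ℂ)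
    (hV : IsUnit V) (hA : A = V * Matrix.diagonal d * V⁻¹) :
    kappaV A ≤ Real.sqrt ((n : ℝ) *
      ∑ i : Fin n, _root_.enorm (fun j => V j i) ^ 2 * _root_.enorm (fun j => V⁻¹ i j) ^ 2) := by
  have hdet : IsUnit V.det := (Matrix.isUnit_iff_isUnit_det V).mp hV
  set a : Fin n → ℝ := fun i => _root_.enorm (fun j => V j i) with ha_def
  set b : Fin n → ℝ := fun i => _root_.enorm (fun j => V⁻¹ i j) with hb_def
  have hVV : V⁻¹ * V = 1 := Matrix.nonsing_inv_mul V hdet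
  have hVV' : V * V⁻¹ = 1 := Matrix.mul_nonsing_inv V hdet
  have ha : ∀ i, 0 < a i := by
    intro i
    apply enorm_pos_of_ne_zero
    intro h
    have : (V⁻¹ * V) i i = 0 := by
      rw [Matrix.mul_apply]
      apply Finset.sum_eq_zero
      intro j _
      have : V j i = 0 := congrFun h j
      simp [this]
    rw [hVV] at this
    simp at this
  have hb : ∀ i, 0 < b i := by
    intro i
    apply enorm_pos_of_ne_zero
    intro h
    have : (V⁻¹ * V) i i = 0 := by
      rw [Matrix.mul_apply]
      apply Finset.sum_eq_zero
      intro j _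
      have : V⁻¹ i j = 0 := congrFun h j
      simp [this]
    rw [hVV] at this
    simp at this
  set c : Fin n → ℝ := fun i => Real.sqrt (b i / a i) with hc_def
  have hc : ∀ i, 0 < c i := fun i => Real.sqrt_pos.mpr (div_pos (hb i) (ha i))
  have hc2 : ∀ i, c i ^ 2 = b i / a i := fun i =>
    Real.sq_sqrt (le_of_lt (div_pos (hb i) (ha i)))
  set W : Matrix (Fin n) (Fin n) ℂ := V * Matrix.diagonal (fun i => (c i : ℂ)) with hW_def
  set Wi : Matrix (Fin n) (Fin n) ℂ := Matrix.diagonal (fun i => ((c i)⁻¹ : ℂ)) * V⁻¹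
    with hWi_def
  have hmul : W * Wi = 1 := by
    rw [hW_def, hWi_def, Matrix.mul_assoc, ← Matrix.mul_assoc (Matrix.diagonal _),
      Matrix.diagonal_mul_diagonal]
    have : (fun i => (c i : ℂ) * ((c i)⁻¹ : ℂ)) = fun _ => (1 : ℂ) := by
      funext i
      rw [mul_inv_cancel₀]
      exact_mod_cast (hc i).ne'
    rw [this, Matrix.diagonal_one, Matrix.one_mul, hVV']
  have hWinv : W⁻¹ = Wi := Matrix.inv_eq_right_inv hmul
  have hWunit : IsUnit W := by
    apply (Matrix.isUnit_iff_isUnit_det W).mpr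
    rw [hW_def, Matrix.det_mul, Matrix.det_diagonal]
    apply hdet.mul
    apply isUnit_iff_ne_zero.mpr
    rw [Finset.prod_ne_zero_iff]
    intro i _
    exact_mod_cast (hc i).ne'
  have hdiag : (W⁻¹ * A * W).IsDiag := by
    rw [hWinv, hWi_def, hW_def, hA]
    simp only [Matrix.mul_assoc, Matrix.nonsing_inv_mul_cancel_left V _ hdet,
      Matrix.diagonal_mul_diagonal]
    exact Matrix.isDiag_diagonal _
  have hstep1 : kappaV A ≤ specNorm W * specNorm W⁻¹ := by
    apply csInf_le
    · refine ⟨0, ?_⟩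
      rintro x ⟨U, _, _, rfl⟩
      exact mul_nonneg (specNorm_nonneg _) (specNorm_nonneg _)
    · exact ⟨W, hWunit, hdiag, rfl⟩
  set S : ℝ := ∑ i, a i * b i with hS_def
  have hS0 : 0 ≤ S := Finset.sum_nonneg fun i _ => mul_nonneg (ha i).le (hb i).le
  have habs_c : ∀ i, ‖(c i : ℂ)‖ = c i := fun i => by
    rw [Complex.norm_real, Real.norm_eq_abs, abs_of_pos (hc i)]
  have hfw : ∀ j, ∑ i, ‖W i j‖ ^ 2 = a j * b j := by
    intro j
    have he : ∀ i, ‖W i j‖ = ‖V i j‖ * c j := by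
      intro i
      rw [hW_def, Matrix.mul_diagonal, norm_mul, habs_c]
    calc ∑ i, ‖W i j‖ ^ 2
        = (∑ i, ‖V i j‖ ^ 2) * c j ^ 2 := by
          rw [Finset.sum_mul]
          exact Finset.sum_congr rfl fun i _ => by rw [he i, mul_pow]
      _ = a j ^ 2 * (b j / a j) := by rw [← enorm_sq, hc2]
      _ = a j * b j := by field_simp [(ha j).ne']
  have hfwi : ∀ i, ∑ j, ‖Wi i j‖ ^ 2 = a i * b i := by
    intro i
    have he : ∀ j, ‖Wi i j‖ = (c i)⁻¹ * ‖V⁻¹ i j‖ := by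
      intro j
      rw [hWi_def, Matrix.diagonal_mul, norm_mul]
      congr 1
      rw [show ((c i)⁻¹ : ℂ) = ((c i)⁻¹ : ℝ) by push_cast; ring, Complex.norm_real, Real.norm_eq_abs,
        abs_of_pos (inv_pos.mpr (hc i))]
    calc ∑ j, ‖Wi i j‖ ^ 2
        = ((c i)⁻¹) ^ 2 * ∑ j, ‖V⁻¹ i j‖ ^ 2 := by
          rw [Finset.mul_sum]
          exact Finset.sum_congr rfl fun j _ => by rw [he j, mul_pow]
      _ = (b i / a i)⁻¹ * b i ^ 2 := by rw [← enorm_sq, inv_pow, hc2]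
      _ = a i * b i := by field_simp [(hb i).ne']
  have h1 : specNorm W ≤ Real.sqrt S := by
    refine (specNorm_le_frob W).trans_eq ?_
    rw [Finset.sum_comm]
    congr 1
    exact Finset.sum_congr rfl fun j _ => hfw j
  have h2 : specNorm W⁻¹ ≤ Real.sqrt S := by
    rw [hWinv]
    refine (specNorm_le_frob Wi).trans_eq ?_
    congr 1
    exact Finset.sum_congr rfl fun i _ => hfwi i
  have hstep2 : specNorm W * specNorm W⁻¹ ≤ S := by
    calc specNorm W * specNorm W⁻¹ ≤ Real.sqrt S * Real.sqrt S :=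
          mul_le_mul h1 h2 (specNorm_nonneg _) (Real.sqrt_nonneg _)
      _ = S := Real.mul_self_sqrt hS0
  have hstep3 : S ≤ Real.sqrt ((n : ℝ) * ∑ i, a i ^ 2 * b i ^ 2) := by
    have hy : (0 : ℝ) ≤ (n : ℝ) * ∑ i, a i ^ 2 * b i ^ 2 :=
      mul_nonneg (Nat.cast_nonneg n)
        (Finset.sum_nonneg fun i _ => mul_nonneg (sq_nonneg _) (sq_nonneg _))
    rw [Real.le_sqrt hS0 hy]
    calc S ^ 2 = (∑ i, 1 * (a i * b i)) ^ 2 := by simp [hS_def]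
      _ ≤ (∑ _i : Fin n, (1:ℝ) ^ 2) * ∑ i, (a i * b i) ^ 2 :=
          Finset.sum_mul_sq_le_sq_mul_sq _ _ _
      _ = (n : ℝ) * ∑ i, a i ^ 2 * b i ^ 2 := by
          simp [mul_pow]
  exact hstep1.trans (hstep2.trans hstep3)
end
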